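/- Let F be an uncountable closed subset of the Sorgenfrey line. Then there exists a subset C ⊆ F that is closed in the Sorgenfrey line and, with the subspace topology, is homeomorphic to the Sorgenfrey line. -/

import Mathlib

open Set Filter Topology Function

/-- The Sorgenfrey line: the real line as a type synonym. -/
def SorgenfreyLine : Type := ℝ

notation "𝕊" => SorgenfreyLine

noncomputable instance : LinearOrder 𝕊 := inferInstanceAs (LinearOrder ℝ)
instance : RatCast 𝕊 := inferInstanceAs (RatCast ℝ)

/-- The topology on the Sorgenfrey line, generated by half-open intervals `[a, b)`, `a < b`. -/
instance : TopologicalSpace 𝕊 :=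
  TopologicalSpace.generateFrom {s : Set 𝕊 | ∃ a b : 𝕊, a < b ∧ s = Set.Ico a b}

noncomputable instance : ConditionallyCompleteLinearOrder 𝕊 :=
  inferInstanceAs (ConditionallyCompleteLinearOrder ℝ)
noncomputable instance : Field 𝕊 := inferInstanceAs (Field ℝ)
instance : IsStrictOrderedRing 𝕊 := inferInstanceAs (IsStrictOrderedRing ℝ)
instance : Archimedean 𝕊 := inferInstanceAs (Archimedean ℝ)
noncomputable instance : FloorRing 𝕊 := inferInstanceAs (FloorRing ℝ)
instance : DenselyOrdered 𝕊 := inferInstanceAs (DenselyOrdered ℝ)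

namespace Sorgenfrey

theorem isOpen_Ico (a b : 𝕊) : IsOpen (Ico a b) := by
  rcases lt_or_ge a b with hab | hab
  · exact TopologicalSpace.GenerateOpen.basic _ ⟨a, b, hab, rfl⟩
  · rw [Ico_eq_empty hab.not_gt]; exact isOpen_empty

theorem topology_eq :
    instTopologicalSpaceSorgenfreyLine =
      TopologicalSpace.generateFrom {s : Set 𝕊 | ∃ a b : 𝕊, Ico a b = s} := by
  refine le_antisymm (le_generateFrom fun s hs => ?_)
    (TopologicalSpace.generateFrom_anti fun s hs => ?_)
  · rcases hs with ⟨a, b, rfl⟩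
    exact isOpen_Ico a b
  · rcases hs with ⟨a, b, -, rfl⟩
    exact ⟨a, b, rfl⟩

theorem isOpen_Ici (a : 𝕊) : IsOpen (Ici a) :=
  iUnion_Ico_right a ▸ isOpen_iUnion (isOpen_Ico a)

theorem nhds_basis_Ico (a : 𝕊) : (𝓝 a).HasBasis (a < ·) (Ico a ·) := by
  rw [topology_eq, TopologicalSpace.nhds_generateFrom]
  haveI : Nonempty { x // x ≤ a } := Set.nonempty_Iic_subtype
  have : (⨅ x : { i // i ≤ a }, 𝓟 (Ici ↑x)) = 𝓟 (Ici a) := by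
    refine (IsLeast.isGLB ?_).iInf_eq
    exact ⟨⟨⟨a, le_rfl⟩, rfl⟩, forall_mem_range.2 fun b => principal_mono.2 <| Ici_subset_Ici.2 b.2⟩
  simp only [mem_setOf_eq, iInf_and, iInf_exists, @iInf_comm _ (_ ∈ _), @iInf_comm _ (Set 𝕊),
    iInf_iInf_eq_right, mem_Ico]
  simp_rw [@iInf_comm _ 𝕊 (_ ≤ _), iInf_subtype', ← Ici_inter_Iio, ← inf_principal,
    ← inf_iInf, ← iInf_inf, this, iInf_subtype]
  suffices (⨅ x ∈ Ioi a, 𝓟 (Iio x)).HasBasis (a < ·) Iio from this.principal_inf _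
  refine hasBasis_biInf_principal ?_ nonempty_Ioi
  exact directedOn_iff_directed.2 <| Monotone.directed_ge fun x y hxy ↦ Iio_subset_Iio hxy

theorem isOpen_iff {s : Set 𝕊} : IsOpen s ↔ ∀ x ∈ s, ∃ y > x, Ico x y ⊆ s :=
  isOpen_iff_mem_nhds.trans <| forall₂_congr fun x _ => (nhds_basis_Ico x).mem_iff

theorem isClosed_iff {s : Set 𝕊} : IsClosed s ↔ ∀ x, x ∉ s → ∃ y > x, Disjoint (Ico x y) s := by
  simp only [← isOpen_compl_iff, isOpen_iff, mem_compl_iff, subset_compl_iff_disjoint_right]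

theorem mem_of_forall_Ico {F : Set 𝕊} (hF : IsClosed F) {y : 𝕊}
    (h : ∀ ε > (0 : 𝕊), ∃ x ∈ F, y ≤ x ∧ x < y + ε) : y ∈ F := by
  rw [← hF.closure_eq]
  rw [mem_closure_iff_nhds_basis (nhds_basis_Ico y)]
  intro b hb
  rcases h (b - y) (by linarith) with ⟨x, hxF, hyx, hxb⟩
  exact ⟨x, hxF, hyx, by linarith⟩


theorem continuous_add_const (c : 𝕊) : Continuous (fun x : 𝕊 => x + c) := by
  refine continuous_iff_continuousAt.2 fun x => ?_
  rw [ContinuousAt, Filter.HasBasis.tendsto_iff (nhds_basis_Ico x) (nhds_basis_Ico (x + c))]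
  intro b hb
  refine ⟨b - c, by linarith, fun t ht => ?_⟩
  simp only [mem_Ico] at ht ⊢
  constructor <;> linarith [ht.1, ht.2]

theorem countable_aux (S : Set 𝕊) (q : 𝕊) :
    {x | x ∈ S ∧ x < q ∧ (S ∩ Ico x q).Countable}.Countable := by
  set A := {x | x ∈ S ∧ x < q ∧ (S ∩ Ico x q).Countable} with hA
  rcases A.eq_empty_or_nonempty with h | hne
  · simp [h]
  by_cases hbdd : BddBelow A
  · by_cases hm : sInf A ∈ A
    · refine Set.Countable.mono (fun x hx => ?_) hm.2.2
      exact ⟨hx.1, csInf_le hbdd hx, hx.2.1⟩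
    · have key : ∀ n : ℕ, ∃ x ∈ A, x < sInf A + 1 / ((n : 𝕊) + 1) := by
        intro n
        apply exists_lt_of_csInf_lt hne
        have h1 : (0:𝕊) < 1 / ((n : 𝕊) + 1) := by positivity
        linarith
      choose u hu hult using key
      have hsub : A ⊆ ⋃ n, S ∩ Ico (u n) q := by
        intro x hx
        have hx0 : sInf A < x :=
          lt_of_le_of_ne (csInf_le hbdd hx) (Ne.symm fun h => hm (h ▸ hx))
        rcases exists_nat_one_div_lt (sub_pos.2 hx0) with ⟨n, hn⟩
        refine mem_iUnion.2 ⟨n, hx.1, ?_, hx.2.1⟩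
        have := hult n
        push_cast at hn this ⊢
        linarith
      exact (Set.countable_iUnion fun n => (hu n).2.2).mono hsub
  · have key : ∀ n : ℕ, ∃ x ∈ A, x < -(n : 𝕊) :=
      fun n => not_bddBelow_iff.1 hbdd (-(n:𝕊))
    choose u hu hult using key
    have hsub : A ⊆ ⋃ n, S ∩ Ico (u n) q := by
      intro x hx
      rcases exists_nat_ge (-x) with ⟨n, hn⟩
      refine mem_iUnion.2 ⟨n, hx.1, ?_, hx.2.1⟩
      have := hult n
      linarith
    exact (Set.countable_iUnion fun n => (hu n).2.2).mono hsub

theorem countable_bad (S : Set 𝕊) :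
    {x | x ∈ S ∧ ∃ ε > (0:𝕊), (S ∩ Ico x (x + ε)).Countable}.Countable := by
  have hsub : {x | x ∈ S ∧ ∃ ε > (0:𝕊), (S ∩ Ico x (x + ε)).Countable} ⊆
      ⋃ q : ℚ, {x | x ∈ S ∧ x < (q:𝕊) ∧ (S ∩ Ico x (q:𝕊)).Countable} := by
    rintro x ⟨hxS, ε, hε, hc⟩
    rcases exists_rat_btwn (show x < x + ε by linarith) with ⟨q, hq1, hq2⟩
    exact mem_iUnion.2 ⟨q, hxS, hq1,
      hc.mono (inter_subset_inter_right _ (Ico_subset_Ico_right hq2.le))⟩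
  exact (Set.countable_iUnion fun (q : ℚ) => countable_aux S ((q:𝕊))).mono hsub


noncomputable def phi (x : 𝕊) : 𝕊 := Int.fract x + ((Equiv.intEquivNat ⌊x⌋ : ℕ) : 𝕊)

noncomputable def psi (y : 𝕊) : 𝕊 :=
  Int.fract y + ((Equiv.intEquivNat.symm ⌊y⌋.toNat : ℤ) : 𝕊)

theorem phi_nonneg (x : 𝕊) : 0 ≤ phi x :=
  add_nonneg (Int.fract_nonneg x) (Nat.cast_nonneg _)

theorem floor_phi (x : 𝕊) : ⌊phi x⌋ = (Equiv.intEquivNat ⌊x⌋ : ℤ) := by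
  rw [phi, Int.floor_add_natCast, Int.floor_fract, zero_add]

theorem fract_phi (x : 𝕊) : Int.fract (phi x) = Int.fract x := by
  rw [phi, Int.fract_add_natCast, Int.fract_fract]

theorem psi_phi (x : 𝕊) : psi (phi x) = x := by
  rw [psi, floor_phi, fract_phi, Int.toNat_natCast, Equiv.symm_apply_apply,
    Int.fract_add_floor]

theorem floor_psi (y : 𝕊) : ⌊psi y⌋ = Equiv.intEquivNat.symm ⌊y⌋.toNat := by
  rw [psi, Int.floor_add_intCast, Int.floor_fract, zero_add]

theorem phi_psi {y : 𝕊} (hy : 0 ≤ y) : phi (psi y) = y := by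
  have h1 : Int.fract (psi y) = Int.fract y := by
    rw [psi, Int.fract_add_intCast, Int.fract_fract]
  rw [phi, floor_psi, h1, Equiv.apply_symm_apply]
  have h2 : ((⌊y⌋.toNat : ℕ) : 𝕊) = ((⌊y⌋ : ℤ) : 𝕊) := by
    rw [← Int.cast_natCast, Int.toNat_of_nonneg (Int.floor_nonneg.2 hy)]
  rw [h2, Int.fract_add_floor]

theorem continuous_phi : Continuous phi := by
  refine continuous_iff_continuousAt.2 fun x => ?_
  have hmem : Ico x (⌊x⌋ + 1 : ℤ) ∈ 𝓝 x :=
    (nhds_basis_Ico x).mem_of_mem (by exact_mod_cast Int.lt_floor_add_one x)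
  refine ContinuousAt.congr
    ((continuous_add_const (((Equiv.intEquivNat ⌊x⌋ : ℕ) : 𝕊) - (⌊x⌋ : ℤ))).continuousAt)
    (Filter.eventuallyEq_of_mem hmem fun t ht => ?_)
  have hft : ⌊t⌋ = ⌊x⌋ :=
    Int.floor_eq_iff.2 ⟨le_trans (Int.floor_le x) ht.1, by exact_mod_cast ht.2⟩
  show t + _ = phi t
  rw [phi, Int.fract, hft]
  ring

theorem continuousAt_psi {y : 𝕊} (hy : 0 ≤ y) : ContinuousAt psi y := by
  have hmem : Ico y (⌊y⌋ + 1 : ℤ) ∈ 𝓝 y :=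
    (nhds_basis_Ico y).mem_of_mem (by exact_mod_cast Int.lt_floor_add_one y)
  refine ContinuousAt.congr
    ((continuous_add_const (((Equiv.intEquivNat.symm ⌊y⌋.toNat : ℤ) : 𝕊) - (⌊y⌋ : ℤ))).continuousAt)
    (Filter.eventuallyEq_of_mem hmem fun t ht => ?_)
  have hft : ⌊t⌋ = ⌊y⌋ :=
    Int.floor_eq_iff.2 ⟨le_trans (Int.floor_le y) ht.1, by exact_mod_cast ht.2⟩
  show t + _ = psi t
  rw [psi, Int.fract, hft]
  ring

/-- `𝕊` is homeomorphic to `[0, ∞)` in `𝕊`. -/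
noncomputable def homeoIci : 𝕊 ≃ₜ ↥(Ici (0:𝕊)) where
  toFun x := ⟨phi x, phi_nonneg x⟩
  invFun y := psi y
  left_inv x := psi_phi x
  right_inv y := Subtype.ext (phi_psi y.2)
  continuous_toFun := continuous_phi.subtype_mk _
  continuous_invFun := continuous_iff_continuousAt.2 fun y =>
    (continuousAt_psi y.2).comp continuous_subtype_val.continuousAt


theorem ratCast_lt' {p q : ℚ} : (p : 𝕊) < (q : 𝕊) ↔ p < q := Rat.cast_lt (K := ℝ)

section Main

variable (H : ℚ → 𝕊)

/-- The auxiliary monotone right-continuous function. -/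
noncomputable def g (t : 𝕊) : 𝕊 := sInf (H '' {q : ℚ | t < (q : 𝕊)})

variable {H}

theorem gset_nonempty (t : 𝕊) : (H '' {q : ℚ | t < (q : 𝕊)}).Nonempty := by
  rcases exists_rat_gt t with ⟨q, hq⟩
  exact ⟨H q, q, hq, rfl⟩

theorem gset_bddBelow (hH : StrictMono H) (t : 𝕊) :
    BddBelow (H '' {q : ℚ | t < (q : 𝕊)}) := by
  rcases exists_rat_lt t with ⟨q0, hq0⟩
  refine ⟨H q0, fun y hy => ?_⟩
  rcases hy with ⟨q, hq, rfl⟩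
  exact (hH (ratCast_lt'.1 (hq0.trans hq))).le

theorem gmono (hH : StrictMono H) : Monotone (g H) := fun s t hst =>
  csInf_le_csInf (gset_bddBelow hH s) (gset_nonempty t)
    (image_mono fun q hq => lt_of_le_of_lt hst hq)

theorem gstrict (hH : StrictMono H) : StrictMono (g H) := by
  intro t1 t2 h12
  rcases exists_rat_btwn h12 with ⟨q1, hq1, hq1'⟩
  rcases exists_rat_btwn hq1' with ⟨q2, hq2, hq2'⟩
  have h1 : g H t1 ≤ H q1 := csInf_le (gset_bddBelow hH t1) ⟨q1, hq1, rfl⟩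
  have h2 : H q1 < H q2 := hH (ratCast_lt'.1 hq2)
  have h3 : H q2 ≤ g H t2 := by
    refine le_csInf (gset_nonempty t2) ?_
    rintro y ⟨q, hq, rfl⟩
    exact (hH (ratCast_lt'.1 (hq2'.trans hq))).le
  exact lt_of_le_of_lt h1 (lt_of_lt_of_le h2 h3)

theorem gcont (hH : StrictMono H) : Continuous (g H) := by
  refine continuous_iff_continuousAt.2 fun x => ?_
  rw [ContinuousAt, Filter.HasBasis.tendsto_iff (nhds_basis_Ico x) (nhds_basis_Ico (g H x))]
  intro d hd
  rcases exists_lt_of_csInf_lt (gset_nonempty x) hd with ⟨y, ⟨q, hq, rfl⟩, hyd⟩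
  refine ⟨(q : 𝕊), hq, fun t ht => ?_⟩
  refine ⟨gmono hH ht.1, lt_of_le_of_lt ?_ hyd⟩
  exact csInf_le (gset_bddBelow hH t) ⟨q, ht.2, rfl⟩

theorem gmemF {F : Set 𝕊} (hFclosed : IsClosed F) (hH : StrictMono H)
    (hHF : ∀ q, H q ∈ F) (t : 𝕊) : g H t ∈ F := by
  refine mem_of_forall_Ico hFclosed fun ε hε => ?_
  have : g H t < g H t + ε := by linarith
  rcases exists_lt_of_csInf_lt (gset_nonempty t) this with ⟨y, ⟨q, hq, rfl⟩, hlt⟩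
  exact ⟨H q, hHF q, csInf_le (gset_bddBelow hH t) ⟨q, hq, rfl⟩, hlt⟩

theorem gimage_closed (hH : StrictMono H) : IsClosed (g H '' Ici 0) := by
  set C := g H '' Ici 0 with hC
  rw [isClosed_iff]
  intro y hy
  by_contra hcon
  push_neg at hcon
  have hcon' : ∀ b > y, ∃ c ∈ Ico y b, c ∈ C := by
    intro b hb
    rcases Set.not_disjoint_iff.1 (hcon b hb) with ⟨c, hc1, hc2⟩
    exact ⟨c, hc1, hc2⟩
  set T := {t : 𝕊 | 0 ≤ t ∧ y ≤ g H t} with hT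
  have hTne : T.Nonempty := by
    rcases hcon' (y + 1) (by linarith) with ⟨c, hc, s, hs0, rfl⟩
    exact ⟨s, hs0, hc.1⟩
  have hTbdd : BddBelow T := ⟨0, fun t ht => ht.1⟩
  set t0 := sInf T with ht0
  have h00 : (0:𝕊) ≤ t0 := le_csInf hTne fun t ht => ht.1
  have hge : y ≤ g H t0 := by
    by_contra hlt
    push_neg at hlt
    have := (gcont hH).continuousAt (x := t0)
    rw [ContinuousAt, Filter.HasBasis.tendsto_iff (nhds_basis_Ico t0)
      (nhds_basis_Ico (g H t0))] at this
    rcases this y hlt with ⟨b, hb, hmap⟩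
    rcases exists_lt_of_csInf_lt hTne hb with ⟨t, htT, htb⟩
    exact absurd (hmap t ⟨csInf_le hTbdd htT, htb⟩).2 (not_lt.2 htT.2)
  have hle : g H t0 ≤ y := by
    by_contra hgt
    push_neg at hgt
    rcases hcon' (g H t0) hgt with ⟨c, hc, s, hs0, rfl⟩
    have hsT : s ∈ T := ⟨hs0, hc.1⟩
    exact absurd hc.2 (not_lt.2 (gmono hH (csInf_le hTbdd hsT)))
  exact hy ⟨t0, h00, le_antisymm hle hge⟩

theorem gimage_homeo (hH : StrictMono H) :
    Nonempty (↥(g H '' Ici (0:𝕊)) ≃ₜ 𝕊) := by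
  set e := Equiv.Set.image (g H) (Ici (0:𝕊)) (gstrict hH).injective with he
  have hcont : Continuous e := by
    refine continuous_induced_rng.2 ?_
    exact (gcont hH).comp continuous_subtype_val
  have hopen : IsOpenMap e := by
    intro U hU
    rcases isOpen_induced_iff.1 hU with ⟨V, hV, rfl⟩
    rw [isOpen_induced_iff]
    refine ⟨⋃ (t : 𝕊) (_ : 0 ≤ t ∧ t ∈ V) (b : 𝕊) (_ : t < b ∧ Ico t b ⊆ V),
      Ico (g H t) (g H b), ?_, ?_⟩
    · exact isOpen_iUnion fun t => isOpen_iUnion fun _ => isOpen_iUnion fun b =>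
        isOpen_iUnion fun _ => isOpen_Ico _ _
    · ext c
      simp only [mem_preimage, mem_iUnion, mem_image]
      constructor
      · rintro ⟨t, ⟨ht0, htV⟩, b, ⟨htb, hIV⟩, hc1, hc2⟩
        rcases c.2 with ⟨s, hs0, hgs⟩
        have h1 : t ≤ s := (gstrict hH).le_iff_le.1 (by rw [hgs]; exact hc1)
        have h2 : s < b := (gstrict hH).lt_iff_lt.1 (by rw [hgs]; exact hc2)
        refine ⟨⟨s, hs0⟩, hIV ⟨h1, h2⟩, Subtype.ext hgs⟩
      · rintro ⟨x, hxU, rfl⟩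
        rcases isOpen_iff.1 hV x hxU with ⟨b, hxb, hIV⟩
        exact ⟨(x : 𝕊), ⟨x.2, hxU⟩, b, ⟨hxb, hIV⟩,
          le_refl _, gstrict hH hxb⟩
  exact ⟨(e.toHomeomorphOfContinuousOpen hcont hopen).symm.trans homeoIci.symm⟩

end Main

end Sorgenfrey

/-- Every uncountable closed subset of the Sorgenfrey line contains a subset that is closed in
the Sorgenfrey line and homeomorphic to the Sorgenfrey line. -/
theorem stmt2 (F : Set 𝕊) (hF : ¬ F.Countable) (hFclosed : IsClosed F) :
    ∃ C ⊆ F, IsClosed C ∧ Nonempty (C ≃ₜ 𝕊) := by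
  classical
  set bad := {x | x ∈ F ∧ ∃ ε > (0:𝕊), (F ∩ Ico x (x + ε)).Countable} with hbad
  have hbadc : bad.Countable := Sorgenfrey.countable_bad F
  set D := F \ bad with hD
  have hDF : D ⊆ F := diff_subset
  have hDunc : ¬ D.Countable := by
    intro h
    refine hF (Set.Countable.mono (fun x hx => ?_) (h.union hbadc))
    by_cases hxb : x ∈ bad
    · exact Or.inr hxb
    · exact Or.inl ⟨hx, hxb⟩
  have hdense : ∀ a ∈ D, ∀ b ∈ D, a < b → ∃ c ∈ D, a < c ∧ c < b := by
    intro a ha b hb hab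
    have hunc : ¬ (F ∩ Ico a b).Countable := by
      intro hcount
      exact ha.2 ⟨ha.1, b - a, by linarith,
        by simpa [show a + (b - a) = b by ring] using hcount⟩
    have hne : ((F ∩ Ico a b) \ (bad ∪ {a})).Nonempty := by
      rcases Set.eq_empty_or_nonempty ((F ∩ Ico a b) \ (bad ∪ {a})) with hemp | hne
      · exfalso
        refine hunc (Set.Countable.mono (fun x hx => ?_)
          ((Set.countable_empty.union (hbadc.union (countable_singleton a)))))
        by_cases hxb : x ∈ bad ∪ {a}
        · exact Or.inr hxb
        · exact Or.inl (hemp ▸ ⟨hx, hxb⟩)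
      · exact hne
    rcases hne with ⟨c, ⟨⟨hcF, hcab⟩, hcnb⟩⟩
    refine ⟨c, ⟨hcF, fun hcb => hcnb (Or.inl hcb)⟩, ?_, hcab.2⟩
    exact lt_of_le_of_ne hcab.1 (fun h => hcnb (Or.inr (by simp [← h])))
  have hDnt : D.Nontrivial := by
    by_contra h
    exact hDunc (Set.not_nontrivial_iff.1 h).countable
  haveI : Nontrivial ↥D := hDnt.coe_sort
  haveI : DenselyOrdered ↥D := ⟨fun a b hab => by
    rcases hdense ↑a a.2 ↑b b.2 hab with ⟨c, hcD, h1, h2⟩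
    exact ⟨⟨c, hcD⟩, h1, h2⟩⟩
  rcases Order.embedding_from_countable_to_dense ℚ ↥D with ⟨hemb⟩
  set H : ℚ → 𝕊 := fun q => ((hemb q : ↥D) : 𝕊) with hHdef
  have hH : StrictMono H := fun p q hpq => Subtype.coe_lt_coe.2 (hemb.strictMono hpq)
  have hHF : ∀ q, H q ∈ F := fun q => hDF (hemb q).2
  refine ⟨Sorgenfrey.g H '' Ici 0, ?_, Sorgenfrey.gimage_closed hH,
    Sorgenfrey.gimage_homeo hH⟩
  rintro y ⟨t, -, rfl⟩
  exact Sorgenfrey.gmemF hFclosed hH hHF t
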